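/- Let n ≥ 2 and let Θ, Θ̃ : ZMod n → ℝ be real signals such that F(Θ)_k ≠ 0 for every k ∈ ZMod n. If β(Θ̃)_{0,0} = β(Θ)_{0,0}, β(Θ̃)_{0,1} = β(Θ)_{0,1}, and β(Θ̃)_{1,k} = β(Θ)_{1,k} for every k ∈ ZMod n that is the image of an integer between 1 and n−2, then there exists z ∈ ℂ with |z| = 1 such that F(Θ̃)_k = z^k̄ · F(Θ)_k for every k ∈ ZMod n, where k̄ ∈ {0,…,n−1} is the integer representative of k. (Correctness of the recursive recovery step of the selective-bispectrum inversion algorithm: the Fourier transform is recovered up to a single phase factor.) -/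

import Mathlib

open Finset

/-- The discrete Fourier transform of a signal `Θ : ZMod n → ℂ`:
`F(Θ)_k = Σ_{g} Θ(g) · exp(−2πi·k̄·ḡ/n)`. -/
noncomputable def cyclicDFT (n : ℕ) [NeZero n] (Θ : ZMod n → ℂ) (k : ZMod n) : ℂ :=
  ∑ g : ZMod n,
    Θ g * Complex.exp (-(2 * (Real.pi : ℂ) * Complex.I * (k.val * g.val)) / n)

/-- The bispectrum of a signal `Θ : ZMod n → ℂ`:
`β(Θ)_{j,k} = F(Θ)_j · F(Θ)_k · conj(F(Θ)_{j+k})`. -/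
noncomputable def cyclicBispectrum (n : ℕ) [NeZero n] (Θ : ZMod n → ℂ) (j k : ZMod n) : ℂ :=
  cyclicDFT n Θ j * cyclicDFT n Θ k * (starRingEnd ℂ) (cyclicDFT n Θ (j + k))

/-- Correctness of the recursive recovery step of the selective-bispectrum inversion
algorithm on cyclic groups: equality of the selected `n` bispectral coefficients
forces the Fourier transform of `Θ'` to equal that of `Θ` up to a single phase
factor, `F(Θ')_k = z^k̄ · F(Θ)_k` with `|z| = 1`. -/
theorem selective_bispectrum_recovery_up_to_phase (n : ℕ) [NeZero n] (hn : 2 ≤ n)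
    (Θ Θ' : ZMod n → ℝ)
    (hF : ∀ k : ZMod n, cyclicDFT n (fun g => (Θ g : ℂ)) k ≠ 0)
    (h00 : cyclicBispectrum n (fun g => (Θ' g : ℂ)) 0 0
         = cyclicBispectrum n (fun g => (Θ g : ℂ)) 0 0)
    (h01 : cyclicBispectrum n (fun g => (Θ' g : ℂ)) 0 1
         = cyclicBispectrum n (fun g => (Θ g : ℂ)) 0 1)
    (h1k : ∀ k : ℕ, 1 ≤ k → k ≤ n - 2 →
      cyclicBispectrum n (fun g => (Θ' g : ℂ)) 1 (k : ZMod n)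
        = cyclicBispectrum n (fun g => (Θ g : ℂ)) 1 (k : ZMod n)) :
    ∃ z : ℂ, ‖z‖ = 1 ∧
      ∀ k : ZMod n,
        cyclicDFT n (fun g => (Θ' g : ℂ)) k
          = z ^ k.val * cyclicDFT n (fun g => (Θ g : ℂ)) k := by
  classical
  simp only [cyclicBispectrum, add_zero, zero_add] at h00 h01 h1k
  set F : ZMod n → ℂ := cyclicDFT n (fun g => (Θ g : ℂ)) with hFdef
  set G : ZMod n → ℂ := cyclicDFT n (fun g => (Θ' g : ℂ)) with hGdef
  -- DFT at 0 is real
  have hreal : ∀ f : ZMod n → ℝ,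
      cyclicDFT n (fun g => (f g : ℂ)) 0 = ((∑ g, f g : ℝ) : ℂ) := by
    intro f
    simp [cyclicDFT, ZMod.val_zero]
  have hFr : F 0 = ((∑ g, Θ g : ℝ) : ℂ) := hreal Θ
  have hGr : G 0 = ((∑ g, Θ' g : ℝ) : ℂ) := hreal Θ'
  -- G 0 = F 0
  have hG0 : G 0 = F 0 := by
    rw [hFr, hGr] at h00 ⊢
    rw [Complex.conj_ofReal, Complex.conj_ofReal] at h00
    have h3 : (∑ g, Θ' g) ^ 3 = (∑ g, Θ g) ^ 3 := by
      have h00' : ((∑ g, Θ' g : ℝ) : ℂ) ^ 3 = ((∑ g, Θ g : ℝ) : ℂ) ^ 3 := by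
        linear_combination h00
      exact_mod_cast h00'
    have := (Odd.strictMono_pow (R := ℝ) (⟨1, by norm_num⟩ : Odd 3)).injective h3
    rw [this]
  have hF0 : F 0 ≠ 0 := hF 0
  have hF1 : F 1 ≠ 0 := hF 1
  -- |G 1| = |F 1| data
  have hGG : G 1 * (starRingEnd ℂ) (G 1) = F 1 * (starRingEnd ℂ) (F 1) := by
    apply mul_left_cancel₀ hF0
    rw [← hG0] at h01 ⊢
    linear_combination h01
  set z : ℂ := G 1 / F 1 with hzdef
  have hG1 : G 1 = z * F 1 := by rw [hzdef]; exact (div_mul_cancel₀ _ hF1).symm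
  have hz1 : z * (starRingEnd ℂ) z = 1 := by
    rw [hzdef, map_div₀]
    rw [div_mul_div_comm, hGG]
    exact div_self (by
      intro h
      rcases mul_eq_zero.mp h with h | h
      · exact hF1 h
      · exact hF1 (by simpa using congrArg (starRingEnd ℂ) h))
  have hz0 : z ≠ 0 := by
    intro h; rw [h, zero_mul] at hz1; exact one_ne_zero hz1.symm
  have hzconj : (starRingEnd ℂ) z = z⁻¹ := by
    field_simp
    linear_combination hz1
  have habs : ‖z‖ = 1 := by
    have : Complex.normSq z = 1 := by
      have := hz1
      rw [Complex.mul_conj] at this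
      exact_mod_cast this
    rw [Complex.norm_def, this, Real.sqrt_one]
  refine ⟨z, habs, ?_⟩
  have key : ∀ k : ℕ, k < n → G (k : ZMod n) = z ^ k * F (k : ZMod n) := by
    intro k
    induction k with
    | zero => intro _; simpa using hG0
    | succ k ih =>
      intro hkn
      rcases Nat.eq_zero_or_pos k with rfl | hk1
      · simpa using hG1
      · have hk2 : k ≤ n - 2 := by omega
        have h := h1k k hk1 hk2
        have ihk := ih (by omega)
        rw [hG1, ihk] at h
        have hFk : F (k : ZMod n) ≠ 0 := hF _
        have h3 : z ^ (k + 1) * (starRingEnd ℂ) (G (1 + (k : ZMod n)))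
            = (starRingEnd ℂ) (F (1 + (k : ZMod n))) := by
          apply mul_left_cancel₀ (mul_ne_zero hF1 hFk)
          linear_combination h
        have h4 := congrArg (starRingEnd ℂ) h3
        simp only [map_mul, map_pow, Complex.conj_conj, hzconj, inv_pow] at h4
        have hcast : ((k + 1 : ℕ) : ZMod n) = 1 + (k : ZMod n) := by
          push_cast; ring
        rw [hcast]
        calc G (1 + (k : ZMod n))
            = z ^ (k + 1) * ((z ^ (k + 1))⁻¹ * G (1 + (k : ZMod n))) := by
              rw [← mul_assoc, mul_inv_cancel₀ (pow_ne_zero _ hz0), one_mul]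
          _ = z ^ (k + 1) * F (1 + (k : ZMod n)) := by rw [h4]
  intro k
  have := key k.val k.val_lt
  simpa [ZMod.natCast_val, ZMod.cast_id] using this
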